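/- If L is a language accepted by a DFA with n states and L is not a code, then there exists a word x ∈ L* admitting two distinct factorizations into elements of L with |x| < n² + n. -/

import Mathlib

open Computability

/-- `l` is a factorization of `x` into elements of `L`. -/
def IsFactorization {α : Type*} (L : Language α) (x : List α) (l : List (List α)) : Prop :=
  (∀ w ∈ l, w ∈ L) ∧ l.flatten = x

/-- `L` is a code: every word has at most one factorization into elements of `L`. -/
def IsCode {α : Type*} (L : Language α) : Prop :=
  ∀ x l₁ l₂, IsFactorization L x l₁ → IsFactorization L x l₂ → l₁ = l₂

namespace Stmt2Aux

variable {α : Type*}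

/-- The list of full factor-words strictly before position `i` (previous cut strict). -/
def pre : List (List α) → ℕ → List (List α)
  | [], _ => []
  | w :: l, i => if i ≤ w.length then [] else w :: pre l (i - w.length)

/-- The part of the factor-word containing position `i` that lies before `i`. -/
def wa : List (List α) → ℕ → List α
  | [], _ => []
  | w :: l, i => if i ≤ w.length then w.take i else wa l (i - w.length)

/-- The part of the factor-word containing position `i` that lies after `i`. -/
def wb : List (List α) → ℕ → List α
  | [], _ => []
  | w :: l, i => if i ≤ w.length then w.drop i else wb l (i - w.length)

/-- The list of full factor-words after position `i`. -/
def post : List (List α) → ℕ → List (List α)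
  | [], _ => []
  | w :: l, i => if i ≤ w.length then l else post l (i - w.length)

theorem split_eq (l : List (List α)) (i : ℕ) (h1 : 1 ≤ i) (h2 : i ≤ l.flatten.length) :
    l = pre l i ++ (wa l i ++ wb l i) :: post l i := by
  induction l generalizing i with
  | nil => simp at h2; omega
  | cons w l ih =>
    by_cases hi : i ≤ w.length
    · simp [pre, wa, wb, post, hi]
    · simp only [pre, wa, wb, post, if_neg hi, List.cons_append]
      have h2' : i - w.length ≤ l.flatten.length := by
        simp only [List.flatten_cons, List.length_append] at h2; omega
      rw [← ih (i - w.length) (by omega) h2']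

theorem flatten_pre_wa (l : List (List α)) (i : ℕ) :
    (pre l i).flatten ++ wa l i = l.flatten.take i := by
  induction l generalizing i with
  | nil => simp [pre, wa]
  | cons w l ih =>
    by_cases hi : i ≤ w.length
    · simp [pre, wa, hi, List.flatten_cons, List.take_append,
        Nat.sub_eq_zero_of_le hi]
    · simp only [pre, wa, if_neg hi, List.flatten_cons, List.take_append,
        List.append_assoc, ih]
      rw [List.take_of_length_le (show w.length ≤ i by omega)]

theorem flatten_wb_post (l : List (List α)) (i : ℕ) :
    wb l i ++ (post l i).flatten = l.flatten.drop i := by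
  induction l generalizing i with
  | nil => simp [wb, post]
  | cons w l ih =>
    by_cases hi : i ≤ w.length
    · simp [wb, post, hi, List.flatten_cons, List.drop_append,
        Nat.sub_eq_zero_of_le hi]
    · simp only [wb, post, if_neg hi, List.flatten_cons, List.drop_append, ih]
      rw [List.drop_of_length_le (show w.length ≤ i by omega)]
      simp

theorem wa_ne_nil (l : List (List α)) (i : ℕ) (h1 : 1 ≤ i) (h2 : i ≤ l.flatten.length) :
    wa l i ≠ [] := by
  induction l generalizing i with
  | nil => simp at h2; omega
  | cons w l ih =>
    by_cases hi : i ≤ w.length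
    · simp only [wa, if_pos hi, ne_eq, List.take_eq_nil_iff]
      rintro (h | rfl)
      · omega
      · simp at hi; omega
    · have h2' : i - w.length ≤ l.flatten.length := by
        simp only [List.flatten_cons, List.length_append] at h2; omega
      simpa only [wa, if_neg hi] using ih (i - w.length) (by omega) h2'

theorem pre_cons_of_lt (w : List α) (l : List (List α)) (i : ℕ) (h : ¬ i ≤ w.length) :
    pre (w :: l) i = w :: pre l (i - w.length) := by simp [pre, h]

theorem pre_nil_of_le (w : List α) (l : List (List α)) (i : ℕ) (h : i ≤ w.length) :
    pre (w :: l) i = [] := by simp [pre, h]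

theorem wa_cons_of_le (w : List α) (l : List (List α)) (i : ℕ) (h : i ≤ w.length) :
    wa (w :: l) i = w.take i := by simp [wa, h]

/-- The excision surgery: removing `x[i..j)` from a factorized word when the
partial-word states at `i` and `j` agree yields a factorization of the shorter word. -/
theorem surgery {σ : Type*} (M : DFA α σ) {x : List α} {l : List (List α)} {i j : ℕ}
    (hmem : ∀ w ∈ l, w ∈ M.accepts) (hfl : l.flatten = x)
    (h1 : 1 ≤ i) (hij : i < j) (hj : j ≤ x.length)
    (hs : M.eval (wa l i) = M.eval (wa l j)) :
    IsFactorization M.accepts (x.take i ++ x.drop j)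
      (pre l i ++ (wa l i ++ wb l j) :: post l j) := by
  subst hfl
  have hi' : i ≤ l.flatten.length := by omega
  have hsplit_i := split_eq l i h1 hi'
  have hsplit_j := split_eq l j (by omega) hj
  constructor
  · intro w hw
    rcases List.mem_append.mp hw with hw | hw
    · exact hmem w (by rw [hsplit_i]; exact List.mem_append.mpr (Or.inl hw))
    · rcases List.mem_cons.mp hw with rfl | hw
      · -- the merged word
        have hmid : wa l j ++ wb l j ∈ M.accepts := by
          have hm : wa l j ++ wb l j ∈ pre l j ++ (wa l j ++ wb l j) :: post l j :=
            List.mem_append.mpr (Or.inr (List.mem_cons_self))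
          rw [← hsplit_j] at hm
          exact hmem _ hm
        rw [DFA.mem_accepts] at hmid ⊢
        have e1 : M.eval (wa l i ++ wb l j) = M.evalFrom (M.eval (wa l i)) (wb l j) :=
          M.evalFrom_of_append _ _ _
        have e2 : M.eval (wa l j ++ wb l j) = M.evalFrom (M.eval (wa l j)) (wb l j) :=
          M.evalFrom_of_append _ _ _
        rw [e1, hs, ← e2]; exact hmid
      · exact hmem w (by rw [hsplit_j]; exact List.mem_append.mpr (Or.inr (List.mem_cons_of_mem _ hw)))
  · rw [List.flatten_append, List.flatten_cons, ← List.append_assoc, ← List.append_assoc,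
      flatten_pre_wa, List.append_assoc, flatten_wb_post]

/-- Key bound lemma: a minimal word with two distinct factorizations whose first factors
have different lengths is short. -/
theorem key {α σ : Type*} [Fintype σ] (M : DFA α σ) (hnil : ([] : List α) ∉ M.accepts)
    {x w w' : List α} {t₁ t₂ : List (List α)}
    (hx1 : IsFactorization M.accepts x (w :: t₁))
    (hx2 : IsFactorization M.accepts x (w' :: t₂))
    (hmin : ∀ (y : List α) (m₁ m₂ : List (List α)), IsFactorization M.accepts y m₁ →
      IsFactorization M.accepts y m₂ → m₁ ≠ m₂ → ¬ y.length < x.length)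
    (hlt : w.length < w'.length) :
    x.length < Fintype.card σ ^ 2 + Fintype.card σ := by
  classical
  set n := Fintype.card σ with hn
  obtain ⟨hmem1, hfl1⟩ := hx1
  obtain ⟨hmem2, hfl2⟩ := hx2
  have hwmem : w ∈ M.accepts := hmem1 w (List.mem_cons_self)
  have hw'mem : w' ∈ M.accepts := hmem2 w' (List.mem_cons_self)
  have hfl1' : w ++ t₁.flatten = x := by simpa using hfl1
  have hfl2' : w' ++ t₂.flatten = x := by simpa using hfl2
  have hwx : x.take w.length = w := by rw [← hfl1']; exact List.take_left
  have hw'x : x.take w'.length = w' := by rw [← hfl2']; exact List.take_left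
  have hw'len : w'.length ≤ x.length := by rw [← hfl2']; simp
  -- Step A: excision within the common prefix `w`
  have claimA : ∀ i j : ℕ, i < j → j ≤ w.length →
      M.eval (x.take i) = M.eval (x.take j) → False := by
    intro i j hij hjw hfij
    have hjw' : j ≤ w'.length := by omega
    have htkj : ∀ m : List α, j ≤ m.length → x.take m.length = m → x.take j = m.take j := by
      intro m hm hxm
      rw [← hxm, List.take_take]
      congr 1; omega
    have hkey : ∀ m : List α, j ≤ m.length → x.take m.length = m → m ∈ M.accepts →
        x.take i ++ m.drop j ∈ M.accepts := by
      intro m hm hxm hmm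
      rw [DFA.mem_accepts] at hmm ⊢
      have heval : M.eval (x.take i ++ m.drop j) = M.eval m :=
        calc M.eval (x.take i ++ m.drop j)
          = M.evalFrom (M.eval (x.take i)) (m.drop j) := M.evalFrom_of_append _ _ _
        _ = M.evalFrom (M.eval (x.take j)) (m.drop j) := by rw [hfij]
        _ = M.evalFrom (M.eval (m.take j)) (m.drop j) := by rw [htkj m hm hxm]
        _ = M.eval (m.take j ++ m.drop j) := (M.evalFrom_of_append _ _ _).symm
        _ = M.eval m := by rw [List.take_append_drop]
      rw [heval]; exact hmm
    have hu'mem := hkey w hjw hwx hwmem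
    have hv'mem := hkey w' hjw' hw'x hw'mem
    have hdropsplit : ∀ (m : List α) (f : List (List α)), j ≤ m.length → m ++ f.flatten = x →
        x.drop j = m.drop j ++ f.flatten := by
      intro m f hm hxm
      rw [← hxm, List.drop_append, Nat.sub_eq_zero_of_le hm, List.drop_zero]
    have hy1 : IsFactorization M.accepts (x.take i ++ x.drop j) ((x.take i ++ w.drop j) :: t₁) := by
      refine ⟨?_, ?_⟩
      · intro v hv; rcases List.mem_cons.mp hv with rfl | hv
        · exact hu'mem
        · exact hmem1 v (List.mem_cons_of_mem _ hv)
      · rw [List.flatten_cons, hdropsplit w t₁ hjw hfl1', ← List.append_assoc]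
    have hy2 : IsFactorization M.accepts (x.take i ++ x.drop j) ((x.take i ++ w'.drop j) :: t₂) := by
      refine ⟨?_, ?_⟩
      · intro v hv; rcases List.mem_cons.mp hv with rfl | hv
        · exact hv'mem
        · exact hmem2 v (List.mem_cons_of_mem _ hv)
      · rw [List.flatten_cons, hdropsplit w' t₂ hjw' hfl2', ← List.append_assoc]
    have hxlen : w.length ≤ x.length := by omega
    have hlen' : (x.take i ++ w.drop j).length ≠ (x.take i ++ w'.drop j).length := by
      simp only [List.length_append, List.length_take, List.length_drop]
      omega
    refine hmin _ _ _ hy1 hy2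
      (fun hcon => hlen' (by rw [((List.cons.injEq _ _ _ _).mp hcon).1])) ?_
    simp only [List.length_append, List.length_take, List.length_drop]
    omega
  have hwn : w.length + 1 ≤ n := by
    by_contra hb
    push_neg at hb
    have hcard : Fintype.card σ < (Finset.range (w.length + 1)).card := by
      rw [Finset.card_range]; omega
    obtain ⟨i, hi, j, hj, hne, hfij⟩ := Finset.exists_ne_map_eq_of_card_lt_of_maps_to hcard
      (f := fun i => M.eval (x.take i)) (fun a _ => Finset.mem_univ _)
    simp only [Finset.mem_range] at hi hj
    rcases hne.lt_or_gt with hlt' | hlt'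
    · exact claimA i j hlt' (by omega) hfij
    · exact claimA j i hlt' (by omega) hfij.symm
  -- Step B: excision beyond the first cut, tracking both factorizations
  have claimB : ∀ i j : ℕ, w.length + 1 ≤ i → i < j → j ≤ x.length →
      M.eval (wa (w :: t₁) i) = M.eval (wa (w :: t₁) j) →
      M.eval (wa (w' :: t₂) i) = M.eval (wa (w' :: t₂) j) → False := by
    intro i j hiw hij hjx hs1 hs2
    have h1 : 1 ≤ i := by omega
    have hf1 := surgery M hmem1 hfl1 h1 hij hjx hs1
    have hf2 := surgery M hmem2 hfl2 h1 hij hjx hs2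
    have hpre1 : pre (w :: t₁) i = w :: pre t₁ (i - w.length) :=
      pre_cons_of_lt _ _ _ (by omega)
    have hne' : (pre (w :: t₁) i ++ (wa (w :: t₁) i ++ wb (w :: t₁) j) :: post (w :: t₁) j)
        ≠ (pre (w' :: t₂) i ++ (wa (w' :: t₂) i ++ wb (w' :: t₂) j) :: post (w' :: t₂) j) := by
      rw [hpre1, List.cons_append]
      by_cases hc : i ≤ w'.length
      · rw [pre_nil_of_le _ _ _ hc, wa_cons_of_le _ _ _ hc, List.nil_append]
        intro hcon
        have heq := ((List.cons.injEq _ _ _ _).mp hcon).1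
        have hlen := congrArg List.length heq
        simp only [List.length_append, List.length_take] at hlen
        omega
      · rw [pre_cons_of_lt _ _ _ hc, List.cons_append]
        intro hcon
        have heq := ((List.cons.injEq _ _ _ _).mp hcon).1
        have hlen := congrArg List.length heq
        omega
    refine hmin _ _ _ hf1 hf2 hne' ?_
    simp only [List.length_append, List.length_take, List.length_drop]
    omega
  by_contra hbig
  push_neg at hbig
  have hsq : n ^ 2 = n * n := sq n
  have hcard2 : Fintype.card (σ × σ) < (Finset.Icc (w.length + 1) x.length).card := by
    rw [Fintype.card_prod, Nat.card_Icc, ← hn]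
    omega
  obtain ⟨i, hi, j, hj, hne, hfij⟩ := Finset.exists_ne_map_eq_of_card_lt_of_maps_to hcard2
    (f := fun i => (M.eval (wa (w :: t₁) i), M.eval (wa (w' :: t₂) i)))
    (fun a _ => Finset.mem_univ _)
  simp only [Finset.mem_Icc] at hi hj
  have hfij1 := congrArg Prod.fst hfij
  have hfij2 := congrArg Prod.snd hfij
  simp only at hfij1 hfij2
  rcases hne.lt_or_gt with hlt' | hlt'
  · exact claimB i j hi.1 hlt' hj.2 hfij1 hfij2
  · exact claimB j i hj.1 hlt' hi.2 hfij1.symm hfij2.symm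

end Stmt2Aux

/-- If `L` is accepted by a DFA with `n` states and is not a code, then some word of `L∗`
has two distinct factorizations into elements of `L` and length `< n² + n`. -/
theorem stmt2 {α σ : Type*} [Fintype σ] (M : DFA α σ) (h : ¬ IsCode M.accepts) :
    ∃ x l₁ l₂, IsFactorization M.accepts x l₁ ∧ IsFactorization M.accepts x l₂ ∧
      l₁ ≠ l₂ ∧ x.length < (Fintype.card σ) ^ 2 + Fintype.card σ := by
  classical
  have hnσ : Nonempty σ := ⟨M.start⟩
  have hnpos : 0 < Fintype.card σ := Fintype.card_pos
  have hpow : 0 < Fintype.card σ ^ 2 := pow_pos hnpos 2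
  by_cases hnil : ([] : List α) ∈ M.accepts
  · refine ⟨[], [], [[]], ⟨by simp, rfl⟩, ⟨by simpa using hnil, by simp⟩, by simp, ?_⟩
    simp only [List.length_nil]
    omega
  · rw [IsCode] at h
    push_neg at h
    obtain ⟨x₀, l₁₀, l₂₀, hf10, hf20, hne0⟩ := h
    have hP : ∃ k : ℕ, ∃ x l₁ l₂, IsFactorization M.accepts x l₁ ∧
        IsFactorization M.accepts x l₂ ∧ l₁ ≠ l₂ ∧ x.length = k :=
      ⟨x₀.length, x₀, l₁₀, l₂₀, hf10, hf20, hne0, rfl⟩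
    obtain ⟨x, l₁, l₂, hx1, hx2, hne, hlen⟩ := Nat.find_spec hP
    have hmin : ∀ (y : List α) (m₁ m₂ : List (List α)), IsFactorization M.accepts y m₁ →
        IsFactorization M.accepts y m₂ → m₁ ≠ m₂ → ¬ y.length < x.length := by
      intro y m₁ m₂ h1 h2 h12 hlt
      exact Nat.find_min hP (hlen ▸ hlt) ⟨y, m₁, m₂, h1, h2, h12, rfl⟩
    refine ⟨x, l₁, l₂, hx1, hx2, hne, ?_⟩
    have hnonnil : ∀ (m : List (List α)), (∀ v ∈ m, v ∈ M.accepts) → m.flatten = [] → m = [] := by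
      intro m hm hfm
      rcases m with _ | ⟨v, m⟩
      · rfl
      · exfalso
        have hv : v = [] := List.flatten_eq_nil_iff.mp hfm v (List.mem_cons_self)
        exact hnil (hv ▸ hm v (List.mem_cons_self))
    rcases l₁ with _ | ⟨w, t₁⟩
    · exfalso
      have hx : x = [] := hx1.2.symm
      exact hne (hnonnil l₂ hx2.1 (by rw [hx2.2, hx])).symm
    rcases l₂ with _ | ⟨w', t₂⟩
    · exfalso
      have hx : x = [] := hx2.2.symm
      exact hne (hnonnil _ hx1.1 (by rw [hx1.2, hx]))
    have hfl1' : w ++ t₁.flatten = x := by simpa using hx1.2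
    have hfl2' : w' ++ t₂.flatten = x := by simpa using hx2.2
    have hwdiff : w.length ≠ w'.length := by
      intro heq
      have hw : x.take w.length = w := by rw [← hfl1']; exact List.take_left
      have hw' : x.take w'.length = w' := by rw [← hfl2']; exact List.take_left
      have hwe : w = w' := by rw [← hw, ← hw', heq]
      have hwne : w ≠ [] := fun hh => hnil (hh ▸ hx1.1 w (List.mem_cons_self))
      have h1 : IsFactorization M.accepts (x.drop w.length) t₁ :=
        ⟨fun v hv => hx1.1 v (List.mem_cons_of_mem _ hv),
          by rw [← hfl1', List.drop_left]⟩
      have h2 : IsFactorization M.accepts (x.drop w.length) t₂ :=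
        ⟨fun v hv => hx2.1 v (List.mem_cons_of_mem _ hv),
          by rw [heq, ← hfl2', List.drop_left]⟩
      have hxlen : w.length + t₁.flatten.length = x.length := by
        rw [← hfl1']; simp
      have hwl : 1 ≤ w.length := by
        rcases w with _ | _
        · exact absurd rfl hwne
        · simp
      exact hmin _ _ _ h1 h2 (fun hco => hne (by rw [hwe, hco]))
        (by simp only [List.length_drop]; omega)
    rcases Nat.lt_or_ge w.length w'.length with hlw | hge
    · exact Stmt2Aux.key M hnil ⟨hx1.1, hx1.2⟩ ⟨hx2.1, hx2.2⟩ hmin hlw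
    · exact Stmt2Aux.key M hnil ⟨hx2.1, hx2.2⟩ ⟨hx1.1, hx1.2⟩
        (fun y m₁ m₂ a b c => hmin y m₁ m₂ a b c) (by omega)
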